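/- Let q ∈ (0,1) and p̃ ∈ (0,1). Then the map θ̃ ↦ G(p̃, θ̃) is differentiable on (0,∞) with partial derivative ∂G/∂θ̃ (p̃, θ̃) = (p̃/q)^{θ̃}·((1−p̃)/(1−q))^{θ̃}·(ln(p̃/q) − ln((1−p̃)/(1−q))) / (q·(p̃/q)^{θ̃} + (1−q)·((1−p̃)/(1−q))^{θ̃})², which is strictly positive when p̃ > q and strictly negative when p̃ < q; in particular G(p̃, ·) is strictly increasing in θ̃ when p̃ > q and strictly decreasing in θ̃ when p̃ < q. (Part of Proposition 5.1.) -/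

import Mathlib

/-- `G(p̃, θ̃) = (q^{−θ̃}p̃^{θ̃} − (1−q)^{−θ̃}(1−p̃)^{θ̃}) / (q^{1−θ̃}p̃^{θ̃} + (1−q)^{1−θ̃}(1−p̃)^{θ̃})`. -/
noncomputable def G (q pt tt : ℝ) : ℝ :=
  (q ^ (-tt) * pt ^ tt - (1 - q) ^ (-tt) * (1 - pt) ^ tt) /
    (q ^ (1 - tt) * pt ^ tt + (1 - q) ^ (1 - tt) * (1 - pt) ^ tt)

/-- Part of Proposition 5.1: monotonicity of `G` in its second argument. -/
theorem stmt17 (q pt : ℝ) (hq : q ∈ Set.Ioo (0 : ℝ) 1) (hpt : pt ∈ Set.Ioo (0 : ℝ) 1) :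
    (∀ θt > (0 : ℝ),
      HasDerivAt (fun x => G q pt x)
        ((pt / q) ^ θt * ((1 - pt) / (1 - q)) ^ θt *
            (Real.log (pt / q) - Real.log ((1 - pt) / (1 - q))) /
          (q * (pt / q) ^ θt + (1 - q) * ((1 - pt) / (1 - q)) ^ θt) ^ 2) θt ∧
      (q < pt →
        0 < (pt / q) ^ θt * ((1 - pt) / (1 - q)) ^ θt *
              (Real.log (pt / q) - Real.log ((1 - pt) / (1 - q))) /
            (q * (pt / q) ^ θt + (1 - q) * ((1 - pt) / (1 - q)) ^ θt) ^ 2) ∧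
      (pt < q →
        (pt / q) ^ θt * ((1 - pt) / (1 - q)) ^ θt *
              (Real.log (pt / q) - Real.log ((1 - pt) / (1 - q))) /
            (q * (pt / q) ^ θt + (1 - q) * ((1 - pt) / (1 - q)) ^ θt) ^ 2 < 0)) ∧
    (q < pt → StrictMonoOn (fun θt => G q pt θt) (Set.Ioi 0)) ∧
    (pt < q → StrictAntiOn (fun θt => G q pt θt) (Set.Ioi 0)) := by
  obtain ⟨hq0, hq1⟩ := hq
  obtain ⟨hp0, hp1⟩ := hpt
  have hq1' : (0:ℝ) < 1 - q := by linarith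
  have hp1' : (0:ℝ) < 1 - pt := by linarith
  set a := pt / q with ha
  set b := (1 - pt) / (1 - q) with hb
  have ha0 : 0 < a := div_pos hp0 hq0
  have hb0 : 0 < b := div_pos hp1' hq1'
  -- rewrite G
  have hGeq : (fun x => G q pt x) = fun x => (a ^ x - b ^ x) / (q * a ^ x + (1 - q) * b ^ x) := by
    funext x
    have h1 : q ^ (-x) * pt ^ x = a ^ x := by
      rw [ha, Real.div_rpow hp0.le hq0.le, Real.rpow_neg hq0.le]
      ring
    have h2 : (1 - q) ^ (-x) * (1 - pt) ^ x = b ^ x := by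
      rw [hb, Real.div_rpow hp1'.le hq1'.le, Real.rpow_neg hq1'.le]
      ring
    have h3 : q ^ (1 - x) * pt ^ x = q * a ^ x := by
      rw [show (1:ℝ) - x = 1 + (-x) by ring, Real.rpow_add hq0, Real.rpow_one, mul_assoc, h1]
    have h4 : (1 - q) ^ (1 - x) * (1 - pt) ^ x = (1 - q) * b ^ x := by
      rw [show (1:ℝ) - x = 1 + (-x) by ring, Real.rpow_add hq1', Real.rpow_one, mul_assoc, h2]
    rw [G, h1, h2, h3, h4]
  have hDpos : ∀ x : ℝ, 0 < q * a ^ x + (1 - q) * b ^ x := fun x =>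
    add_pos (mul_pos hq0 (Real.rpow_pos_of_pos ha0 x))
      (mul_pos hq1' (Real.rpow_pos_of_pos hb0 x))
  have hderiv : ∀ x : ℝ, HasDerivAt (fun x => G q pt x)
      (a ^ x * b ^ x * (Real.log a - Real.log b) /
        (q * a ^ x + (1 - q) * b ^ x) ^ 2) x := by
    intro x
    rw [hGeq]
    have hA : HasDerivAt (fun x : ℝ => a ^ x) (a ^ x * Real.log a) x :=
      (Real.hasStrictDerivAt_const_rpow ha0 x).hasDerivAt
    have hB : HasDerivAt (fun x : ℝ => b ^ x) (b ^ x * Real.log b) x :=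
      (Real.hasStrictDerivAt_const_rpow hb0 x).hasDerivAt
    have hN : HasDerivAt (fun x : ℝ => a ^ x - b ^ x)
        (a ^ x * Real.log a - b ^ x * Real.log b) x := hA.sub hB
    have hD : HasDerivAt (fun x : ℝ => q * a ^ x + (1 - q) * b ^ x)
        (q * (a ^ x * Real.log a) + (1 - q) * (b ^ x * Real.log b)) x :=
      (hA.const_mul q).add (hB.const_mul (1 - q))
    have := hN.div hD (hDpos x).ne'
    refine this.congr_deriv ?_
    rw [div_eq_div_iff (pow_pos (hDpos x) 2).ne' (pow_pos (hDpos x) 2).ne']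
    ring
  -- sign of the derivative
  have hsign_pos : ∀ x : ℝ, q < pt →
      0 < a ^ x * b ^ x * (Real.log a - Real.log b) / (q * a ^ x + (1 - q) * b ^ x) ^ 2 := by
    intro x h
    have hab : b < a := by
      rw [ha, hb, div_lt_div_iff₀ hq1' hq0]
      nlinarith
    have hlog : Real.log b < Real.log a := Real.log_lt_log hb0 hab
    exact div_pos (mul_pos (mul_pos (Real.rpow_pos_of_pos ha0 x)
      (Real.rpow_pos_of_pos hb0 x)) (sub_pos.mpr hlog)) (pow_pos (hDpos x) 2)
  have hsign_neg : ∀ x : ℝ, pt < q →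
      a ^ x * b ^ x * (Real.log a - Real.log b) / (q * a ^ x + (1 - q) * b ^ x) ^ 2 < 0 := by
    intro x h
    have hab : a < b := by
      rw [ha, hb, div_lt_div_iff₀ hq0 hq1']
      nlinarith
    have hlog : Real.log a < Real.log b := Real.log_lt_log ha0 hab
    apply div_neg_of_neg_of_pos
    · exact mul_neg_of_pos_of_neg
        (mul_pos (Real.rpow_pos_of_pos ha0 x) (Real.rpow_pos_of_pos hb0 x)) (by linarith)
    · positivity
  refine ⟨fun θt _ => ⟨hderiv θt, fun h => hsign_pos θt h, fun h => hsign_neg θt h⟩,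
    fun h => ?_, fun h => ?_⟩
  · apply strictMonoOn_of_deriv_pos (convex_Ioi 0)
    · exact fun x _ => (hderiv x).differentiableAt.continuousAt.continuousWithinAt
    · intro x hx
      rw [(hderiv x).deriv]
      exact hsign_pos x h
  · apply strictAntiOn_of_deriv_neg (convex_Ioi 0)
    · exact fun x _ => (hderiv x).differentiableAt.continuousAt.continuousWithinAt
    · intro x hx
      rw [(hderiv x).deriv]
      exact hsign_neg x h
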